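/- For every natural number k, the family of vectors u_{k,m} ∈ ℝ^{k+1}, m = 0, 1, …, k, defined by u_{k,m}(α) = 2^{−k/2} · v_{k,m}(α) / √(m!·(k−m)!), is an orthonormal basis of the Euclidean space ℝ^{k+1}; hence the dimer hopping matrix H_k is diagonalized by an orthonormal eigenbasis with H_k u_{k,m} = (2m − k) u_{k,m}. -/

import Mathlib

open Matrix

/-- The dimer hopping matrix `H_k` restricted to the `k`-particle subspace:
a `(k+1) × (k+1)` symmetric tridiagonal matrix with off-diagonal entries
`√((α+1)(k−α))`. -/
noncomputable def hopH (k : ℕ) : Matrix (Fin (k+1)) (Fin (k+1)) ℝ :=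
  fun α β =>
    if (α : ℕ) + 1 = (β : ℕ) then Real.sqrt ((((α : ℕ) + 1) * (k - (α : ℕ)) : ℕ))
    else if (β : ℕ) + 1 = (α : ℕ) then Real.sqrt ((((β : ℕ) + 1) * (k - (β : ℕ)) : ℕ))
    else 0

/-- The integer coefficient `S_{k,m}(α) = Σ_{j=0}^{m} (−1)^{k+m+α+j} C(m,j) C(k−m, α−j)`,
with the binomial coefficient taken to be `0` when the lower index is out of range. -/
def Scoef (k m α : ℕ) : ℤ :=
  ∑ j ∈ Finset.range (m+1),
    if j ≤ α then (-1 : ℤ)^(k+m+α+j) * (m.choose j) * ((k-m).choose (α - j)) else 0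

/-- The (unnormalized) eigenvector `v_{k,m}(α) = √(α!(k−α)!) · S_{k,m}(α)`. -/
noncomputable def vvec (k m : ℕ) : Fin (k+1) → ℝ :=
  fun α => Real.sqrt (((α : ℕ).factorial * (k - (α : ℕ)).factorial : ℕ)) * (Scoef k m (α : ℕ) : ℝ)

/-- The normalized eigenvector `u_{k,m} = 2^{−k/2} v_{k,m} / √(m!(k−m)!)`. -/
noncomputable def uvec (k m : ℕ) : Fin (k+1) → ℝ :=
  fun α => vvec k m α / Real.sqrt ((2 : ℝ) ^ k * (m.factorial * (k - m).factorial : ℕ))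


section KravAux
open Polynomial Finset

noncomputable def Ppoly (k m : ℕ) : Polynomial ℤ := (1 - X)^m * (1 + X)^(k-m)

noncomputable def ccoef (k m α : ℕ) : ℤ := (Ppoly k m).coeff α

lemma coeff_one_sub_X_pow (m j : ℕ) :
    ((1 - X : Polynomial ℤ)^m).coeff j = (-1)^j * m.choose j := by
  have h1 : (1 - X : Polynomial ℤ) = -(X + C (-1)) := by
    simp [C_neg]; ring
  rw [h1, neg_pow, ← C_1, ← C_neg, ← C_pow, coeff_C_mul, coeff_X_add_C_pow]
  rcases le_or_gt j m with h | h
  · have : m = (m - j) + j := by omega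
    rw [this, pow_add]
    simp only [Nat.add_sub_cancel]
    have h2 : ((-1 : ℤ))^(m-j) * ((-1:ℤ))^j * ((-1:ℤ))^(m-j) = (-1)^j := by
      rw [mul_comm, ← mul_assoc, ← pow_add]
      have : m - j + (m - j) = 2 * (m - j) := by omega
      rw [this, pow_mul]
      norm_num
    push_cast
    rw [← mul_assoc, h2]
  · simp [Nat.choose_eq_zero_of_lt h]

lemma ccoef_eq (k m α : ℕ) :
    ccoef k m α = ∑ i ∈ range (α+1), (-1:ℤ)^i * m.choose i * (k-m).choose (α - i) := by
  rw [ccoef, Ppoly, coeff_mul, Finset.Nat.sum_antidiagonal_eq_sum_range_succ_mk]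
  refine Finset.sum_congr rfl fun i _ => ?_
  rw [coeff_one_sub_X_pow, coeff_one_add_X_pow, mul_assoc]

lemma Scoef_eq (k m α : ℕ) : Scoef k m α = (-1)^(k+m+α) * ccoef k m α := by
  rw [ccoef_eq, Finset.mul_sum]
  set g : ℕ → ℤ := fun i => (-1:ℤ)^(k+m+α) * ((-1:ℤ)^i * m.choose i * (k-m).choose (α - i)) with hg
  have h1 : Scoef k m α = ∑ j ∈ range (min m α + 1), g j := by
    rw [Scoef]
    rw [← Finset.sum_subset (s₁ := range (min m α + 1))
      (by intro x hx; simp at hx ⊢; omega)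
      (f := fun j => if j ≤ α then (-1 : ℤ)^(k+m+α+j) * (m.choose j) * ((k-m).choose (α - j)) else 0)
      (by intro x hx hx'; simp only [Finset.mem_range] at hx hx'
          rw [if_neg (by omega)])]
    refine Finset.sum_congr rfl fun j hj => ?_
    simp only [Finset.mem_range] at hj
    rw [if_pos (by omega), hg]
    simp only [pow_add]
    ring
  have h2 : (∑ i ∈ range (α + 1), g i) = ∑ i ∈ range (min m α + 1), g i := by
    rw [← Finset.sum_subset (s₁ := range (min m α + 1))
      (by intro x hx; simp at hx ⊢; omega)
      (by intro x hx hx'; simp only [Finset.mem_range] at hx hx'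
          have : m < x := by omega
          simp [hg, Nat.choose_eq_zero_of_lt this])]
  rw [h1, h2]

lemma Ppoly_ode (k m : ℕ) (hm : m ≤ k) :
    (1 - X^2) * derivative (Ppoly k m)
      = (C ((k:ℤ) - 2*m) - C (k:ℤ) * X) * Ppoly k m := by
  have key1 : ∀ (p : Polynomial ℤ) (n : ℕ), p * (C (n:ℤ) * p^(n-1)) = C (n:ℤ) * p^n := by
    intro p n
    cases n with
    | zero => simp
    | succ n => rw [Nat.add_sub_cancel, pow_succ]; ring
  rw [Ppoly, derivative_mul, derivative_pow, derivative_pow]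
  have d1 : derivative (1 - X : Polynomial ℤ) = -1 := by simp
  have d2 : derivative (1 + X : Polynomial ℤ) = 1 := by simp
  rw [d1, d2]
  have e1 := key1 (1 - X) m
  have e2 := key1 (1 + X) (k - m)
  have hkm : ((k - m : ℕ) : ℤ) = (k:ℤ) - (m:ℤ) := by push_cast [hm]; ring
  have expand : (1 - X^2 : Polynomial ℤ) = (1 - X) * (1 + X) := by ring
  rw [expand]
  calc (1 - X) * (1 + X) *
        (C (m:ℤ) * (1 - X) ^ (m-1) * (-1) * (1 + X) ^ (k - m)
          + (1 - X) ^ m * (C ((k-m : ℕ):ℤ) * (1 + X) ^ (k - m - 1) * 1))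
      = -(((1 - X) * (C (m:ℤ) * (1 - X)^(m-1))) * (1 + X) * (1 + X)^(k-m))
        + ((1 + X) * (C ((k-m:ℕ):ℤ) * (1 + X)^(k-m-1))) * (1 - X) * (1 - X)^m := by ring
    _ = -((C (m:ℤ) * (1 - X)^m) * (1 + X) * (1 + X)^(k-m))
        + (C ((k-m:ℕ):ℤ) * (1 + X)^(k-m)) * (1 - X) * (1 - X)^m := by rw [e1, e2]
    _ = (C ((k:ℤ) - 2*m) - C (k:ℤ) * X) * ((1 - X) ^ m * (1 + X) ^ (k - m)) := by
        have c2 : (C (2:ℤ)) = (2 : Polynomial ℤ) := by norm_num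
        rw [hkm, _root_.map_sub, _root_.map_sub, _root_.map_mul, c2]
        ring

lemma ccoef_rec (k m : ℕ) (hm : m ≤ k) (a : ℕ) :
    ((a:ℤ)+1) * ccoef k m (a+1) + (2*(m:ℤ) - (k:ℤ)) * ccoef k m a
      + (if 1 ≤ a then ((k:ℤ) - (a:ℤ) + 1) * ccoef k m (a-1) else 0) = 0 := by
  have E := Ppoly_ode k m hm
  have E2 : derivative (Ppoly k m)
      = C ((k:ℤ)-2*m) * Ppoly k m - C (k:ℤ) * (X * Ppoly k m)
        + X^2 * derivative (Ppoly k m) := by linear_combination E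
  have hXP : ∀ (q : Polynomial ℤ) (n : ℕ),
      (X * q).coeff n = if 1 ≤ n then q.coeff (n-1) else 0 := by
    intro q n; rw [mul_comm, ← pow_one X, coeff_mul_X_pow']
  have hX2P : ∀ (q : Polynomial ℤ) (n : ℕ),
      (X^2 * q).coeff n = if 2 ≤ n then q.coeff (n-2) else 0 := by
    intro q n; rw [mul_comm, coeff_mul_X_pow']
  have hc := congrArg (fun p => Polynomial.coeff p a) E2
  simp only [coeff_add, coeff_sub, coeff_C_mul, coeff_derivative, hXP, hX2P] at hc
  match a with
  | 0 =>
    simp only [if_neg (by omega : ¬ (1:ℕ) ≤ 0), if_neg (by omega : ¬ (2:ℕ) ≤ 0)] at hc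
    simp only [if_neg (by omega : ¬ (1:ℕ) ≤ 0)]
    push_cast at hc ⊢
    simp only [ccoef] at hc ⊢
    linear_combination hc
  | 1 =>
    simp only [if_pos (by omega : (1:ℕ) ≤ 1), if_neg (by omega : ¬ (2:ℕ) ≤ 1)] at hc
    simp only [if_pos (by omega : (1:ℕ) ≤ 1)]
    push_cast at hc ⊢
    simp only [ccoef] at hc ⊢
    linear_combination hc
  | (t+2) =>
    simp only [if_pos (by omega : 1 ≤ t+2), if_pos (by omega : 2 ≤ t+2)] at hc
    simp only [if_pos (by omega : 1 ≤ t+2)]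
    simp only [Nat.add_sub_cancel, coeff_derivative] at hc
    have h1 : t + 2 - 1 = t + 1 := by omega
    rw [h1] at hc ⊢
    push_cast at hc ⊢
    simp only [ccoef] at hc ⊢
    linear_combination hc

lemma Ppoly_natDegree_le (k m : ℕ) (hm : m ≤ k) : (Ppoly k m).natDegree ≤ k := by
  have h1 : (1 - X : Polynomial ℤ).natDegree ≤ 1 := by
    compute_degree
  have h2 : (1 + X : Polynomial ℤ).natDegree ≤ 1 := by
    compute_degree
  calc (Ppoly k m).natDegree ≤ ((1-X:Polynomial ℤ)^m).natDegree + ((1+X:Polynomial ℤ)^(k-m)).natDegree :=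
        natDegree_mul_le
    _ ≤ m * 1 + (k-m) * 1 := by
        gcongr
        · exact natDegree_pow_le.trans (by nlinarith [h1])
        · exact natDegree_pow_le.trans (by nlinarith [h2])
    _ ≤ k := by omega

lemma ccoef_eq_zero (k m α : ℕ) (hm : m ≤ k) (h : k < α) : ccoef k m α = 0 :=
  coeff_eq_zero_of_natDegree_lt (lt_of_le_of_lt (Ppoly_natDegree_le k m hm) h)

lemma ccoef_duality (k m β : ℕ) (hm : m ≤ k) (hβ : β ≤ k) :
    (k.choose m : ℤ) * ccoef k m β = (k.choose β : ℤ) * ccoef k β m := by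
  classical
  set T := Polynomial (Polynomial ℤ)
  set A : T := C (1 + X) + C (1 - X) * X with hA
  -- expansion (a)
  have expa : A ^ k = ∑ i ∈ Finset.range (k+1),
      C ((1-X:Polynomial ℤ)^i * (1+X:Polynomial ℤ)^(k-i) * (k.choose i : Polynomial ℤ)) * X^i := by
    rw [hA, add_comm (C (1+X)) _, add_pow]
    refine Finset.sum_congr rfl fun i _ => ?_
    have : ((k.choose i : ℕ) : T) = C ((k.choose i : ℕ) : Polynomial ℤ) := by
      simp [_root_.map_natCast]
    rw [this, mul_pow, ← C_pow, ← C_pow]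
    simp only [_root_.map_mul]
    ring
  -- expansion (b)
  have hA2 : A = (1 + X) + C X * (1 - X) := by
    rw [hA, _root_.map_add, _root_.map_sub, _root_.map_one]; ring
  have expb : A ^ k = ∑ i ∈ Finset.range (k+1),
      C ((X:Polynomial ℤ)^i * (k.choose i : Polynomial ℤ)) * ((1-X:T)^i * (1+X:T)^(k-i)) := by
    rw [hA2, add_comm ((1:T) + X) _, add_pow]
    refine Finset.sum_congr rfl fun i _ => ?_
    have : ((k.choose i : ℕ) : T) = C ((k.choose i : ℕ) : Polynomial ℤ) := by
      simp [_root_.map_natCast]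
    rw [this, mul_pow, ← C_pow]
    simp only [_root_.map_mul]
    ring
  -- take outer coeff at m
  have hcoeffa : (A ^ k).coeff m
      = (1-X:Polynomial ℤ)^m * (1+X:Polynomial ℤ)^(k-m) * (k.choose m : Polynomial ℤ) := by
    rw [expa, finset_sum_coeff]
    rw [Finset.sum_eq_single m]
    · rw [coeff_C_mul, coeff_X_pow, if_pos rfl, mul_one]
    · intro b _ hbm
      rw [coeff_C_mul, coeff_X_pow, if_neg (by omega), mul_zero]
    · intro hmem
      exact absurd (Finset.mem_range.mpr (by omega)) hmem
  have hcoeffb : (A ^ k).coeff m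
      = ∑ i ∈ Finset.range (k+1),
          (X:Polynomial ℤ)^i * (k.choose i : Polynomial ℤ) * C (ccoef k i m) := by
    rw [expb, finset_sum_coeff]
    refine Finset.sum_congr rfl fun i hi => ?_
    have hik : i ≤ k := by simp at hi; omega
    have hmap : ((1-X:T)^i * (1+X:T)^(k-i)) = Polynomial.map (C : ℤ →+* Polynomial ℤ) (Ppoly k i) := by
      rw [Ppoly, Polynomial.map_mul, Polynomial.map_pow, Polynomial.map_pow,
          Polynomial.map_sub, Polynomial.map_add, Polynomial.map_one, Polynomial.map_X]
    rw [coeff_C_mul, hmap, Polynomial.coeff_map]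
    rfl
  -- now equate inner coeff at β
  have key := congrArg (fun p => Polynomial.coeff p β) (hcoeffa.symm.trans hcoeffb)
  rw [finset_sum_coeff] at key
  have hL : ((1-X:Polynomial ℤ)^m * (1+X:Polynomial ℤ)^(k-m) * (k.choose m : Polynomial ℤ)).coeff β
      = (k.choose m : ℤ) * ccoef k m β := by
    have : ((k.choose m : ℕ) : Polynomial ℤ) = C ((k.choose m : ℕ) : ℤ) := by simp [_root_.map_natCast]
    rw [this, mul_comm _ (C _), coeff_C_mul]
    rfl
  have hR : (∑ i ∈ Finset.range (k+1),
      ((X:Polynomial ℤ)^i * (k.choose i : Polynomial ℤ) * C (ccoef k i m)).coeff β)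
      = (k.choose β : ℤ) * ccoef k β m := by
    rw [Finset.sum_eq_single β]
    · have : ((k.choose β : ℕ) : Polynomial ℤ) = C ((k.choose β : ℕ) : ℤ) := by simp [_root_.map_natCast]
      rw [this, mul_assoc, ← _root_.map_mul, mul_comm ((X:Polynomial ℤ)^β) _, coeff_C_mul, coeff_X_pow, if_pos rfl, mul_one]
      try push_cast
      try ring
    · intro b _ hbβ
      have : ((k.choose b : ℕ) : Polynomial ℤ) = C ((k.choose b : ℕ) : ℤ) := by simp [_root_.map_natCast]
      rw [this, mul_assoc, ← _root_.map_mul, mul_comm ((X:Polynomial ℤ)^b) _, coeff_C_mul, coeff_X_pow, if_neg (by omega), mul_zero]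
    · intro hmem
      exact absurd (Finset.mem_range.mpr (by omega)) hmem
  rw [hL, hR] at key
  exact key

noncomputable def PpolyR (k m : ℕ) : Polynomial ℝ :=
  (1 - X)^m * (1 + X)^(k-m)

lemma PpolyR_eq_map (k m : ℕ) :
    PpolyR k m = Polynomial.map (Int.castRingHom ℝ) (Ppoly k m) := by
  rw [PpolyR, Ppoly, Polynomial.map_mul, Polynomial.map_pow, Polynomial.map_pow,
      Polynomial.map_sub, Polynomial.map_add, Polynomial.map_one, Polynomial.map_X]

lemma PpolyR_coeff (k m α : ℕ) : (PpolyR k m).coeff α = (ccoef k m α : ℝ) := by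
  rw [PpolyR_eq_map, Polynomial.coeff_map]; rfl

lemma PpolyR_natDegree_lt (k m : ℕ) (hm : m ≤ k) : (PpolyR k m).natDegree < k + 1 := by
  rw [PpolyR_eq_map]
  exact lt_of_le_of_lt ((natDegree_map_le).trans (Ppoly_natDegree_le k m hm)) (by omega)

lemma K2 (k m m' : ℕ) (hm' : m' ≤ k) :
    (∑ α ∈ Finset.range (k+1), ccoef k m' α * ccoef k α m)
      = if m' = m then 2^k else 0 := by
  classical
  set q : Polynomial ℝ :=
    ∑ α ∈ Finset.range (k+1), C ((ccoef k m' α : ℝ)) * ((1-X)^α * (1+X)^(k-α)) with hq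
  have main : q = C ((2:ℝ)^k) * X^m' := by
    apply eq_of_infinite_eval_eq
    apply Set.Infinite.mono (s := {(-1:ℝ)}ᶜ)
    · intro x hx
      have hx1 : (1:ℝ) + x ≠ 0 := by
        simp only [Set.mem_compl_iff, Set.mem_singleton_iff] at hx
        intro h; apply hx; linarith
      set y : ℝ := (1-x)/(1+x) with hy
      have term_eq : ∀ α ∈ Finset.range (k+1),
          (1-x)^α * (1+x)^(k-α) = (1+x)^k * y^α := by
        intro α hα
        have hαk : α ≤ k := by simp at hα; omega
        have : (1+x)^k = (1+x)^α * (1+x)^(k-α) := by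
          rw [← pow_add]; congr 1; omega
        rw [this, hy, div_pow]
        field_simp
      have h1y : 1 - y = 2*x/(1+x) := by rw [hy]; field_simp; ring
      have h2y : 1 + y = 2/(1+x) := by rw [hy]; field_simp; ring
      simp only [Set.mem_setOf_eq, hq, eval_finset_sum, eval_mul, eval_pow, eval_add,
        eval_sub, eval_one, eval_X, eval_C]
      calc ∑ α ∈ Finset.range (k+1), (ccoef k m' α : ℝ) * ((1-x)^α * (1+x)^(k-α))
          = (1+x)^k * ∑ α ∈ Finset.range (k+1), (ccoef k m' α : ℝ) * y^α := by
            rw [Finset.mul_sum]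
            refine Finset.sum_congr rfl fun α hα => ?_
            rw [term_eq α hα]; ring
        _ = (1+x)^k * Polynomial.eval y (PpolyR k m') := by
            rw [eval_eq_sum_range' (PpolyR_natDegree_lt k m' hm')]
            congr 1
            exact Finset.sum_congr rfl fun α _ => by rw [PpolyR_coeff]
        _ = (1+x)^k * ((1-y)^m' * (1+y)^(k-m')) := by
            rw [PpolyR]; simp [eval_pow]
        _ = (2:ℝ)^k * x^m' := by
            rw [h1y, h2y, div_pow, div_pow]
            have hsplit : (1+x)^k = (1+x)^m' * (1+x)^(k-m') := by
              rw [← pow_add]; congr 1; omega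
            have h2split : (2:ℝ)^k = 2^m' * 2^(k-m') := by
              rw [← pow_add]; congr 1; omega
            rw [hsplit, h2split]
            field_simp
            ring
    · have : ({(-1:ℝ)}ᶜ : Set ℝ).Infinite := (Set.finite_singleton _).infinite_compl
      exact this
  have key := congrArg (fun p => Polynomial.coeff p m) main
  simp only [hq, finset_sum_coeff, coeff_C_mul, coeff_X_pow] at key
  have hL : ∀ α ∈ Finset.range (k+1),
      (ccoef k m' α : ℝ) * ((1-X:Polynomial ℝ)^α * (1+X:Polynomial ℝ)^(k-α)).coeff m
      = (ccoef k m' α : ℝ) * (ccoef k α m : ℝ) := by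
    intro α _
    rw [show ((1-X:Polynomial ℝ)^α * (1+X:Polynomial ℝ)^(k-α)) = PpolyR k α from rfl, PpolyR_coeff]
  rw [Finset.sum_congr rfl hL] at key
  have : ((∑ α ∈ Finset.range (k+1), ccoef k m' α * ccoef k α m : ℤ) : ℝ)
      = ((if m' = m then (2:ℤ)^k else 0 : ℤ) : ℝ) := by
    push_cast
    rw [key]
    by_cases h : m' = m
    · subst h; simp
    · rw [if_neg h, if_neg (by omega)]; simp
  exact_mod_cast this

lemma gram (k m m' : ℕ) (hm : m ≤ k) (hm' : m' ≤ k) :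
    (∑ α ∈ Finset.range (k+1),
        ((α.factorial * (k-α).factorial : ℕ) : ℤ) * (Scoef k m α * Scoef k m' α))
      = if m = m' then 2^k * ((m.factorial * (k-m).factorial : ℕ) : ℤ) else 0 := by
  have hdual : ∀ α, α ≤ k → ((α.factorial * (k-α).factorial : ℕ) : ℤ) * ccoef k m α
      = ((m.factorial * (k-m).factorial : ℕ) : ℤ) * ccoef k α m := by
    intro α hα
    have h1 := ccoef_duality k m α hm hα
    have h2 : (k.choose m) * (m.factorial * (k-m).factorial) = k.factorial := by
      rw [← Nat.choose_mul_factorial_mul_factorial hm]; ring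
    have h3 : (k.choose α) * (α.factorial * (k-α).factorial) = k.factorial := by
      rw [← Nat.choose_mul_factorial_mul_factorial hα]; ring
    have hk0 : (k.factorial : ℤ) ≠ 0 := by exact_mod_cast k.factorial_ne_zero
    apply mul_left_cancel₀ hk0
    calc (k.factorial:ℤ) * (↑(α.factorial * (k-α).factorial) * ccoef k m α)
        = (↑(k.choose m) * ↑(m.factorial * (k-m).factorial))
            * (↑(α.factorial * (k-α).factorial) * ccoef k m α) := by
          rw [← Nat.cast_mul, h2]
      _ = (↑(m.factorial*(k-m).factorial) * ↑(α.factorial * (k-α).factorial))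
            * (↑(k.choose m) * ccoef k m α) := by ring
      _ = (↑(m.factorial*(k-m).factorial) * ↑(α.factorial*(k-α).factorial))
            * (↑(k.choose α) * ccoef k α m) := by rw [h1]
      _ = (↑(k.choose α) * ↑(α.factorial*(k-α).factorial))
            * (↑(m.factorial*(k-m).factorial) * ccoef k α m) := by ring
      _ = ↑(k.factorial) * (↑(m.factorial*(k-m).factorial) * ccoef k α m) := by
          rw [← Nat.cast_mul, h3]
  have hsign : ∀ α : ℕ, Scoef k m α * Scoef k m' α
      = (-1:ℤ)^(m+m') * (ccoef k m α * ccoef k m' α) := by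
    intro α
    rw [Scoef_eq, Scoef_eq]
    have : (-1:ℤ)^(k+m+α) * (-1:ℤ)^(k+m'+α) = (-1:ℤ)^(m+m') := by
      rw [← pow_add]
      have he : k+m+α+(k+m'+α) = 2*(k+α) + (m+m') := by omega
      rw [he, pow_add, pow_mul]
      norm_num
    calc (-1:ℤ)^(k+m+α) * ccoef k m α * ((-1:ℤ)^(k+m'+α) * ccoef k m' α)
        = ((-1:ℤ)^(k+m+α) * (-1:ℤ)^(k+m'+α)) * (ccoef k m α * ccoef k m' α) := by ring
      _ = _ := by rw [this]
  have step : ∀ α ∈ Finset.range (k+1),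
      ((α.factorial * (k-α).factorial : ℕ) : ℤ) * (Scoef k m α * Scoef k m' α)
      = (-1:ℤ)^(m+m') * ↑(m.factorial*(k-m).factorial) * (ccoef k m' α * ccoef k α m) := by
    intro α hα
    have hαk : α ≤ k := by simp at hα; omega
    rw [hsign α]
    calc ((α.factorial * (k-α).factorial : ℕ) : ℤ) * ((-1:ℤ)^(m+m') * (ccoef k m α * ccoef k m' α))
        = (-1:ℤ)^(m+m') * ((↑(α.factorial * (k-α).factorial) * ccoef k m α) * ccoef k m' α) := by ring
      _ = (-1:ℤ)^(m+m') * ((↑(m.factorial*(k-m).factorial) * ccoef k α m) * ccoef k m' α) := by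
          rw [hdual α hαk]
      _ = _ := by ring
  rw [Finset.sum_congr rfl step, ← Finset.mul_sum, K2 k m m' hm']
  by_cases h : m' = m
  · subst h
    rw [if_pos rfl, if_pos rfl]
    have : (-1:ℤ)^(m'+m') = 1 := by
      rw [← two_mul, pow_mul]; norm_num
    rw [this]; ring
  · rw [if_neg h, if_neg (fun hc => h hc.symm), mul_zero]

lemma Scoef_zero_of_gt (k m α : ℕ) (hm : m ≤ k) (h : k < α) : Scoef k m α = 0 := by
  rw [Scoef_eq, ccoef_eq_zero k m α hm h, mul_zero]

lemma Scoef_rec (k m a : ℕ) (hm : m ≤ k) :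
    ((a:ℤ)+1) * Scoef k m (a+1)
      + (if 1 ≤ a then ((k:ℤ)-(a:ℤ)+1) * Scoef k m (a-1) else 0)
      = (2*(m:ℤ) - (k:ℤ)) * Scoef k m a := by
  have h := ccoef_rec k m hm a
  match a with
  | 0 =>
    simp only [if_neg (by omega : ¬ (1:ℕ) ≤ 0)] at h ⊢
    rw [Scoef_eq, Scoef_eq]
    simp only [Nat.add_zero, Nat.cast_zero] at h ⊢
    rw [show k+m+1 = (k+m)+1 from rfl, pow_succ]
    push_cast at h ⊢
    linear_combination (-(-1:ℤ)^(k+m)) * h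
  | (t+1) =>
    simp only [if_pos (by omega : 1 ≤ t+1)] at h ⊢
    rw [Scoef_eq, Scoef_eq, Scoef_eq]
    simp only [Nat.add_sub_cancel] at h ⊢
    rw [show k+m+(t+1+1) = (k+m+t)+2 from by omega,
        show k+m+(t+1) = (k+m+t)+1 from by omega]
    simp only [pow_succ]
    push_cast at h ⊢
    linear_combination ((-1:ℤ)^(k+m+t)) * h


lemma sqrt_nat_mul (x y : ℕ) :
    Real.sqrt (x:ℕ) * Real.sqrt (y:ℕ) = Real.sqrt ((x*y : ℕ)) := by
  push_cast
  rw [← Real.sqrt_mul (by positivity)]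

lemma sqrt_sq_nat_mul (c M : ℕ) :
    Real.sqrt ((c*c*M : ℕ)) = (c:ℝ) * Real.sqrt (M:ℕ) := by
  push_cast
  rw [show ((c:ℝ)*c*M) = (c:ℝ)^2 * M by ring, Real.sqrt_mul (sq_nonneg _),
      Real.sqrt_sq (by positivity)]

/-- the `n`-th summand of the matrix-vector product, as a function on `ℕ`. -/
noncomputable def gfun (k m a : ℕ) : ℕ → ℝ := fun n =>
  (if a + 1 = n then Real.sqrt (((a+1) * (k - a) : ℕ))
    else if n + 1 = a then Real.sqrt (((n+1) * (k - n) : ℕ)) else 0)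
  * (Real.sqrt ((n.factorial * (k - n).factorial : ℕ)) * (Scoef k m n : ℝ))

lemma sum_gfun (k m a : ℕ) (hm : m ≤ k) (ha : a ≤ k) :
    ∑ n ∈ Finset.range (k+1), gfun k m a n
      = (2*(m:ℝ) - k) * (Real.sqrt ((a.factorial * (k-a).factorial : ℕ)) * (Scoef k m a : ℝ)) := by
  classical
  have hsplit : ∀ n ∈ Finset.range (k+1), gfun k m a n
      = (if a+1 = n then Real.sqrt (((a+1) * (k - a) : ℕ))
            * (Real.sqrt ((n.factorial * (k - n).factorial : ℕ)) * (Scoef k m n : ℝ)) else 0)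
        + (if n+1 = a then Real.sqrt (((n+1) * (k - n) : ℕ))
            * (Real.sqrt ((n.factorial * (k - n).factorial : ℕ)) * (Scoef k m n : ℝ)) else 0) := by
    intro n _
    rw [gfun]
    by_cases h1 : a + 1 = n
    · rw [if_pos h1, if_pos h1, if_neg (by omega), add_zero]
    · rw [if_neg h1, if_neg h1, zero_add]
      by_cases h2 : n + 1 = a
      · rw [if_pos h2, if_pos h2]
      · rw [if_neg h2, if_neg h2, zero_mul]
  rw [Finset.sum_congr rfl hsplit, Finset.sum_add_distrib]
  -- first sum
  have hs1 : (∑ n ∈ Finset.range (k+1), if a+1 = n then Real.sqrt (((a+1) * (k - a) : ℕ))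
        * (Real.sqrt ((n.factorial * (k - n).factorial : ℕ)) * (Scoef k m n : ℝ)) else 0)
      = ((a:ℝ)+1) * (Real.sqrt ((a.factorial * (k-a).factorial : ℕ)) * (Scoef k m (a+1) : ℝ)) := by
    rw [Finset.sum_ite_eq]
    by_cases hak : a < k
    · rw [if_pos (Finset.mem_range.mpr (by omega))]
      have hfact : ((a+1) * (k - a)) * ((a+1).factorial * (k-(a+1)).factorial)
          = ((a+1)*(a+1)) * (a.factorial * (k-a).factorial) := by
        have e1 : (a+1).factorial = (a+1) * a.factorial := rfl
        have e2 : (k-a).factorial = (k-a) * (k-(a+1)).factorial := by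
          rw [show k - a = (k - (a+1)) + 1 from by omega]
          rfl
        rw [e1, e2]; ring
      rw [← mul_assoc, sqrt_nat_mul, hfact, sqrt_sq_nat_mul]
      push_cast
      ring
    · have hak' : a = k := by omega
      rw [if_neg (by simp; omega), Scoef_zero_of_gt k m (a+1) hm (by omega)]
      simp
  -- second sum
  have hs2 : (∑ n ∈ Finset.range (k+1), if n+1 = a then Real.sqrt (((n+1) * (k - n) : ℕ))
        * (Real.sqrt ((n.factorial * (k - n).factorial : ℕ)) * (Scoef k m n : ℝ)) else 0)
      = if 1 ≤ a then ((k:ℝ)-(a:ℝ)+1)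
          * (Real.sqrt ((a.factorial * (k-a).factorial : ℕ)) * (Scoef k m (a-1) : ℝ)) else 0 := by
    match a with
    | 0 =>
      rw [if_neg (by omega)]
      rw [Finset.sum_eq_zero]
      intro n _
      rw [if_neg (by omega)]
    | (t+1) =>
      rw [if_pos (by omega)]
      have hcond : ∀ n ∈ Finset.range (k+1),
          (if n+1 = t+1 then Real.sqrt (((n+1) * (k - n) : ℕ))
            * (Real.sqrt ((n.factorial * (k - n).factorial : ℕ)) * (Scoef k m n : ℝ)) else 0)
          = (if t = n then Real.sqrt (((n+1) * (k - n) : ℕ))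
            * (Real.sqrt ((n.factorial * (k - n).factorial : ℕ)) * (Scoef k m n : ℝ)) else 0) := by
        intro n _
        exact if_congr (by omega) rfl rfl
      rw [Finset.sum_congr rfl hcond, Finset.sum_ite_eq, if_pos (Finset.mem_range.mpr (by omega))]
      have htk : t < k := by omega
      have hfact : ((t+1) * (k - t)) * (t.factorial * (k-t).factorial)
          = ((k-t)*(k-t)) * ((t+1).factorial * (k-(t+1)).factorial) := by
        have e1 : (t+1).factorial = (t+1) * t.factorial := rfl
        have e2 : (k-t).factorial = (k-t) * (k-(t+1)).factorial := by
          rw [show k - t = (k - (t+1)) + 1 from by omega]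
          rfl
        rw [e1, e2]; ring
      rw [← mul_assoc, sqrt_nat_mul, hfact, sqrt_sq_nat_mul]
      have : ((k-t : ℕ):ℝ) = (k:ℝ) - (t+1) + 1 := by
        push_cast [Nat.cast_sub (le_of_lt htk)]
        ring
      rw [this, Nat.add_sub_cancel]
      push_cast
      ring
  rw [hs1, hs2]
  have hrec := Scoef_rec k m a hm
  have hrecR : ((a:ℝ)+1) * (Scoef k m (a+1) : ℝ)
      + (if 1 ≤ a then ((k:ℝ)-(a:ℝ)+1) * (Scoef k m (a-1) : ℝ) else 0)
      = (2*(m:ℝ) - (k:ℝ)) * (Scoef k m a : ℝ) := by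
    by_cases h1 : 1 ≤ a
    · rw [if_pos h1] at hrec ⊢
      exact_mod_cast congrArg (Int.cast : ℤ → ℝ) hrec
    · rw [if_neg h1] at hrec ⊢
      exact_mod_cast congrArg (Int.cast : ℤ → ℝ) hrec
  by_cases h1 : 1 ≤ a
  · rw [if_pos h1] at hrecR ⊢
    set s := Real.sqrt ((a.factorial * (k-a).factorial : ℕ))
    linear_combination s * hrecR
  · rw [if_neg h1] at hrecR ⊢
    set s := Real.sqrt ((a.factorial * (k-a).factorial : ℕ))
    linear_combination s * hrecR

open Matrix

lemma hopH_mulVec_vvec (k m : ℕ) (hm : m ≤ k) :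
    hopH k *ᵥ vvec k m = (2*(m:ℝ) - k) • vvec k m := by
  funext α
  have hsum : (hopH k *ᵥ vvec k m) α = ∑ β : Fin (k+1), gfun k m (α:ℕ) (β:ℕ) := rfl
  rw [hsum, Fin.sum_univ_eq_sum_range (gfun k m (α:ℕ)) (k+1),
      sum_gfun k m (α:ℕ) hm (by omega : (α:ℕ) ≤ k)]
  rfl

lemma hopH_mulVec_uvec (k m : ℕ) (hm : m ≤ k) :
    hopH k *ᵥ uvec k m = (2*(m:ℝ) - k) • uvec k m := by
  have huv : uvec k m
      = (Real.sqrt ((2:ℝ)^k * (m.factorial*(k-m).factorial : ℕ)))⁻¹ • vvec k m := by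
    funext α
    simp [uvec, div_eq_inv_mul]
  rw [huv, mulVec_smul, hopH_mulVec_vvec k m hm, smul_comm]

lemma uvec_inner (k i j : ℕ) (hi : i ≤ k) (hj : j ≤ k) :
    (∑ n ∈ Finset.range (k+1),
      (Real.sqrt ((n.factorial * (k-n).factorial : ℕ)) * (Scoef k i n : ℝ)
          / Real.sqrt ((2:ℝ)^k * (i.factorial*(k-i).factorial : ℕ)))
      * (Real.sqrt ((n.factorial * (k-n).factorial : ℕ)) * (Scoef k j n : ℝ)
          / Real.sqrt ((2:ℝ)^k * (j.factorial*(k-j).factorial : ℕ))))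
    = if i = j then 1 else 0 := by
  have hgram := congrArg (Int.cast : ℤ → ℝ) (gram k i j hi hj)
  push_cast at hgram
  set ci := Real.sqrt ((2:ℝ)^k * (i.factorial*(k-i).factorial : ℕ)) with hci
  set cj := Real.sqrt ((2:ℝ)^k * (j.factorial*(k-j).factorial : ℕ)) with hcj
  have hterm : ∀ n ∈ Finset.range (k+1),
      (Real.sqrt ((n.factorial * (k-n).factorial : ℕ)) * (Scoef k i n : ℝ) / ci)
        * (Real.sqrt ((n.factorial * (k-n).factorial : ℕ)) * (Scoef k j n : ℝ) / cj)
      = ((n.factorial * (k-n).factorial : ℕ) : ℝ) * ((Scoef k i n : ℝ) * (Scoef k j n : ℝ)) / (ci * cj) := by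
    intro n _
    rw [div_mul_div_comm]
    congr 1
    have : Real.sqrt ((n.factorial * (k-n).factorial : ℕ))
        * Real.sqrt ((n.factorial * (k-n).factorial : ℕ))
        = ((n.factorial * (k-n).factorial : ℕ) : ℝ) := Real.mul_self_sqrt (by positivity)
    calc Real.sqrt ((n.factorial * (k-n).factorial : ℕ)) * (Scoef k i n : ℝ)
          * (Real.sqrt ((n.factorial * (k-n).factorial : ℕ)) * (Scoef k j n : ℝ))
        = (Real.sqrt ((n.factorial * (k-n).factorial : ℕ))
            * Real.sqrt ((n.factorial * (k-n).factorial : ℕ)))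
          * ((Scoef k i n : ℝ) * (Scoef k j n : ℝ)) := by ring
      _ = _ := by rw [this]
  rw [Finset.sum_congr rfl hterm, ← Finset.sum_div]
  by_cases h : i = j
  · subst h
    rw [if_pos rfl]
    have hnum : (∑ n ∈ Finset.range (k+1),
        ((n.factorial * (k-n).factorial : ℕ) : ℝ) * ((Scoef k i n : ℝ) * (Scoef k i n : ℝ)))
        = 2^k * ((i.factorial * (k-i).factorial : ℕ) : ℝ) := by
      push_cast
      rw [hgram, if_pos rfl]
    rw [hnum]
    have hc2 : ci * ci = 2^k * ((i.factorial * (k-i).factorial : ℕ) : ℝ) := by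
      rw [hci]
      exact Real.mul_self_sqrt (by positivity)
    rw [hc2]
    apply div_self
    positivity
  · rw [if_neg h]
    have hnum : (∑ n ∈ Finset.range (k+1),
        ((n.factorial * (k-n).factorial : ℕ) : ℝ) * ((Scoef k i n : ℝ) * (Scoef k j n : ℝ))) = 0 := by
      push_cast
      rw [hgram, if_neg h]
    rw [hnum, zero_div]


/-- The family `u_{k,m}`, `m = 0, …, k`, is an orthonormal basis of the Euclidean space
`ℝ^{k+1}` (an orthonormal family whose span is everything), and `H_k` is diagonalized by
it: `H_k u_{k,m} = (2m − k) u_{k,m}`. -/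
theorem uvec_orthonormal_basis (k : ℕ) :
    Orthonormal ℝ (fun m : Fin (k+1) =>
        (WithLp.equiv 2 (Fin (k+1) → ℝ)).symm (uvec k (m : ℕ))) ∧
    Submodule.span ℝ (Set.range (fun m : Fin (k+1) =>
        (WithLp.equiv 2 (Fin (k+1) → ℝ)).symm (uvec k (m : ℕ)))) = ⊤ ∧
    ∀ m : Fin (k+1),
      hopH k *ᵥ uvec k (m : ℕ) = (2 * ((m : ℕ) : ℝ) - (k : ℝ)) • uvec k (m : ℕ) := by
  classical
  have hortho : Orthonormal ℝ (fun m : Fin (k+1) =>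
      (WithLp.equiv 2 (Fin (k+1) → ℝ)).symm (uvec k (m : ℕ))) := by
    rw [orthonormal_iff_ite]
    intro i j
    have hinner : (inner ℝ ((WithLp.equiv 2 (Fin (k+1) → ℝ)).symm (uvec k (i : ℕ)))
        ((WithLp.equiv 2 (Fin (k+1) → ℝ)).symm (uvec k (j : ℕ))) : ℝ)
        = ∑ α : Fin (k+1), uvec k (i:ℕ) α * uvec k (j:ℕ) α := by
      simp [PiLp.inner_apply, RCLike.inner_apply, conj_trivial, WithLp.equiv_symm_apply, PiLp.toLp_apply, mul_comm]
    rw [hinner]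
    have : ∑ α : Fin (k+1), uvec k (i:ℕ) α * uvec k (j:ℕ) α
        = ∑ n ∈ Finset.range (k+1),
          (Real.sqrt ((n.factorial * (k-n).factorial : ℕ)) * (Scoef k (i:ℕ) n : ℝ)
              / Real.sqrt ((2:ℝ)^k * ((i:ℕ).factorial*(k-(i:ℕ)).factorial : ℕ)))
          * (Real.sqrt ((n.factorial * (k-n).factorial : ℕ)) * (Scoef k (j:ℕ) n : ℝ)
              / Real.sqrt ((2:ℝ)^k * ((j:ℕ).factorial*(k-(j:ℕ)).factorial : ℕ))) := by
      rw [← Fin.sum_univ_eq_sum_range]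
      rfl
    rw [this, uvec_inner k (i:ℕ) (j:ℕ) (by omega) (by omega)]
    simp [Fin.ext_iff]
  refine ⟨hortho, ?_, ?_⟩
  · apply LinearIndependent.span_eq_top_of_card_eq_finrank hortho.linearIndependent
    simp [finrank_euclideanSpace_fin]
  · intro m
    exact hopH_mulVec_uvec k (m:ℕ) (by omega)

end KravAux
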